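/- Let n ≥ 3 and let Σ_n = (K_n, σ) be a doubly signed complete graph. Suppose there exist x, y ∈ F such that every triangle of Σ_n has double sign equal to x or to y. Then the Hamiltonian circles of Σ_n do not realize all four elements of F as double signs; that is, there exists g ∈ F such that no Hamiltonian circle of Σ_n has double sign g. -/

import Mathlib

/-- The Klein four-group, written additively. -/
abbrev F : Type := ZMod 2 × ZMod 2

/-- The double sign of the triangle spanned by three vertices. -/
def triSign {n : ℕ} (σ : Sym2 (Fin n) → F) (a b c : Fin n) : F :=
  σ s(a, b) + σ s(b, c) + σ s(a, c)

/-- The double sign of a walk: the sum of the labels of its edges. -/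
def walkSign {n : ℕ} (σ : Sym2 (Fin n) → F) {u v : Fin n}
    (w : (⊤ : SimpleGraph (Fin n)).Walk u v) : F :=
  (w.edges.map σ).sum

lemma F_add_self (z : F) : z + z = 0 := by
  revert z; decide

lemma walkSign_nil {n : ℕ} (σ : Sym2 (Fin n) → F) (v : Fin n) :
    walkSign σ (SimpleGraph.Walk.nil : (⊤ : SimpleGraph (Fin n)).Walk v v) = 0 := by
  simp [walkSign]

lemma walkSign_cons {n : ℕ} (σ : Sym2 (Fin n) → F) {a c v : Fin n}
    (h : (⊤ : SimpleGraph (Fin n)).Adj a c) (p : (⊤ : SimpleGraph (Fin n)).Walk c v) :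
    walkSign σ (SimpleGraph.Walk.cons h p) = σ s(a, c) + walkSign σ p := by
  simp [walkSign]

lemma smul_mod_two (k : ℕ) (z : F) : k • z = (k % 2) • z := by
  conv_lhs => rw [← Nat.div_add_mod k 2]
  rw [add_nsmul, mul_nsmul, two_nsmul, F_add_self, smul_zero, zero_add]

lemma exists_ne_ne (a b : F) : ∃ g : F, g ≠ a ∧ g ≠ b := by
  revert a b; decide

lemma key_lemma {n : ℕ} (σ : Sym2 (Fin n) → F) (x y : F)
    (htri : ∀ a b c : Fin n, a ≠ b → a ≠ c → b ≠ c →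
      triSign σ a b c = x ∨ triSign σ a b c = y)
    (r : Fin n) :
    ∀ {a b : Fin n} (p : (⊤ : SimpleGraph (Fin n)).Walk a b),
      r ∉ p.support →
      ∃ k m : ℕ, k + m = p.length ∧
        σ s(r, a) + walkSign σ p + σ s(r, b) = k • x + m • y := by
  intro a b p
  induction p with
  | nil =>
    intro _
    refine ⟨0, 0, rfl, ?_⟩
    simp [walkSign_nil, F_add_self]
  | @cons a c b h q ih =>
    intro hr
    rw [SimpleGraph.Walk.support_cons, List.mem_cons] at hr
    push_neg at hr
    obtain ⟨hra, hrq⟩ := hr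
    obtain ⟨k, m, hkm, heq⟩ := ih hrq
    have hrc : r ≠ c := fun hrc => hrq (hrc ▸ q.start_mem_support)
    have hac : a ≠ c := h.ne
    have hrel : σ s(r, a) + walkSign σ (SimpleGraph.Walk.cons h q) + σ s(r, b)
        = triSign σ r a c + (σ s(r, c) + walkSign σ q + σ s(r, b)) := by
      rw [walkSign_cons, triSign]
      have := F_add_self (σ s(r, c))
      abel_nf
      rw [show (2 : ℤ) • σ s(r, c) = σ s(r, c) + σ s(r, c) by
        rw [two_zsmul]]
      rw [F_add_self]
      abel
    rcases htri r a c hra hrc hac with ht | ht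
    · exact ⟨k + 1, m, by rw [SimpleGraph.Walk.length_cons]; omega, by
        rw [hrel, heq, ht, add_nsmul, one_nsmul]; abel⟩
    · exact ⟨k, m + 1, by rw [SimpleGraph.Walk.length_cons]; omega, by
        rw [hrel, heq, ht, add_nsmul, one_nsmul]; abel⟩

theorem stmt0 (n : ℕ) (hn : 3 ≤ n) (σ : Sym2 (Fin n) → F) (x y : F)
    (htri : ∀ a b c : Fin n, a ≠ b → a ≠ c → b ≠ c →
      triSign σ a b c = x ∨ triSign σ a b c = y) :
    ∃ g : F, ∀ (v : Fin n) (w : (⊤ : SimpleGraph (Fin n)).Walk v v),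
      w.IsHamiltonianCycle → walkSign σ w ≠ g := by
  obtain ⟨g, hg0, hg1⟩ := exists_ne_ne (((n - 2) % 2) • y) (x + ((n - 1) % 2) • y)
  refine ⟨g, fun v w hw => ?_⟩
  -- decompose the cycle
  cases w with
  | nil => exact absurd hw.isCycle SimpleGraph.Walk.IsCycle.not_of_nil
  | @cons _ c _ h q =>
    cases q with
    | nil => exact absurd rfl h.ne
    | @cons _ d _ h2 q2 =>
      obtain ⟨e, p, h', hc⟩ := SimpleGraph.Walk.exists_cons_eq_concat h2 q2
      -- support facts
      have hnd : (SimpleGraph.Walk.cons h2 q2).support.Nodup := by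
        have := hw.isCycle.support_nodup
        rwa [SimpleGraph.Walk.support_cons, List.tail_cons] at this
      rw [hc, SimpleGraph.Walk.support_concat] at hnd
      have hvp : v ∉ p.support := by
        rw [List.nodup_append] at hnd
        intro hv
        exact hnd.2.2 v hv v (List.mem_singleton_self v) rfl
      obtain ⟨k, m, hkm, heq⟩ := key_lemma σ x y htri v p hvp
      -- length
      have hlen : (SimpleGraph.Walk.cons h (SimpleGraph.Walk.cons h2 q2)).length = n := by
        rw [hw.length_eq, Fintype.card_fin]
      have hplen : k + m = n - 2 := by
        have h1 : (SimpleGraph.Walk.cons h2 q2).length = p.length + 1 := by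
          rw [hc, SimpleGraph.Walk.length_concat]
        rw [SimpleGraph.Walk.length_cons, h1] at hlen
        omega
      -- sign computation
      have hsign : walkSign σ (SimpleGraph.Walk.cons h (SimpleGraph.Walk.cons h2 q2))
          = k • x + m • y := by
        rw [walkSign_cons, hc]
        have : walkSign σ (p.concat h') = walkSign σ p + σ s(e, v) := by
          simp [walkSign, SimpleGraph.Walk.edges_concat]
        rw [this, show s(e, v) = s(v, e) from Sym2.eq_swap, ← add_assoc, heq]
      rw [hsign, smul_mod_two k x, smul_mod_two m y]
      have hk2 : k % 2 = 0 ∨ k % 2 = 1 := by omega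
      rcases hk2 with hk | hk
      · have hm : m % 2 = (n - 2) % 2 := by omega
        rw [hk, hm, zero_smul, zero_add]
        exact hg0.symm
      · have hm : m % 2 = (n - 1) % 2 := by omega
        rw [hk, hm, one_smul]
        exact hg1.symm
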